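/- arXiv:2010.02228 — 4 statements merged into one kernel-verified Lean document; each statement's English description precedes it below -/
import Mathlib

section
/- Let m be an even positive integer and let A_1, …, A_m be N×N complex matrices. Then the fully antisymmetrized trace vanishes: ∑_{σ ∈ S_m} sgn(σ) · tr(A_{σ(1)} A_{σ(2)} ⋯ A_{σ(m)}) = 0. (Consequently the winding-number density, and hence the winding number W[V], is identically zero in even total dimension d+D.) -/
/-- Trace is invariant under cyclic rotation of a product of matrices. -/
lemma trace_prod_rotate {N n : ℕ} (B : Fin (n+1) → Matrix (Fin N) (Fin N) ℂ) :
    Matrix.trace (List.ofFn fun i => B (finRotate (n+1) i)).prod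
      = Matrix.trace (List.ofFn B).prod := by
  have h1 : (List.ofFn fun i => B (finRotate (n+1) i))
      = (List.ofFn fun i : Fin n => B i.succ).concat (B 0) := by
    rw [List.ofFn_succ']
    congr 1
    · congr 1
      funext i
      rw [finRotate_succ_apply, Fin.coeSucc_eq_succ]
    · rw [finRotate_succ_apply]
      simp
  have h2 : (List.ofFn B) = B 0 :: List.ofFn fun i : Fin n => B i.succ := by
    rw [List.ofFn_succ]
  rw [h1, h2, List.prod_concat, List.prod_cons, Matrix.trace_mul_comm]

/-- For an even number `m` of `N×N` complex matrices, the fully antisymmetrized trace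
`∑_{σ ∈ S_m} sgn(σ) · tr(A_{σ(1)} ⋯ A_{σ(m)})` vanishes.  (This is the algebraic fact
underlying the vanishing of the winding-number density, and hence of the winding number
`W[V]`, in even total dimension `d+D`.) -/
theorem antisymmetrized_trace_vanishes_of_even {N m : ℕ} (hm : 0 < m) (hme : Even m)
    (A : Fin m → Matrix (Fin N) (Fin N) ℂ) :
    ∑ σ : Equiv.Perm (Fin m),
      ((Equiv.Perm.sign σ : ℤ) : ℂ) * Matrix.trace (List.ofFn fun i => A (σ i)).prod = 0 := by
  obtain ⟨n, rfl⟩ : ∃ n, m = n + 1 := ⟨m - 1, by omega⟩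
  set f : Equiv.Perm (Fin (n+1)) → ℂ := fun σ =>
      ((Equiv.Perm.sign σ : ℤ) : ℂ) * Matrix.trace (List.ofFn fun i => A (σ i)).prod with hf
  show ∑ σ, f σ = 0
  have hodd : Odd n := by
    rcases hme with ⟨k, hk⟩
    exact ⟨k - 1, by omega⟩
  have hsgn : Equiv.Perm.sign (finRotate (n+1)) = -1 := by
    rw [sign_finRotate, Nat.add_sub_cancel, hodd.neg_one_pow]
  have key : ∑ σ, f σ = -∑ σ, f σ := by
    calc ∑ σ, f σ = ∑ σ, f (Equiv.mulRight (finRotate (n+1)) σ) :=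
          (Equiv.sum_comp (Equiv.mulRight (finRotate (n+1))) f).symm
      _ = ∑ σ, -(f σ) := by
          apply Finset.sum_congr rfl
          intro σ _
          rw [hf]
          simp only [Equiv.coe_mulRight]
          have hterm : (List.ofFn fun i => A ((σ * finRotate (n+1)) i))
              = List.ofFn fun i => (A ∘ σ) (finRotate (n+1) i) := rfl
          rw [hterm, trace_prod_rotate (A ∘ σ), map_mul, hsgn]
          have : (List.ofFn (A ∘ σ)) = List.ofFn fun i => A (σ i) := rfl
          rw [this]
          push_cast
          ring
      _ = -∑ σ, f σ := by rw [Finset.sum_neg_distrib]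
  have h2 : (2 : ℂ) * ∑ σ, f σ = 0 := by linear_combination key
  have := mul_eq_zero.mp h2
  simpa using this
end

section
/- Let V : ℝ^3 → Matrix (Fin N) (Fin N) ℂ be twice continuously differentiable with V(θ) unitary for every θ, and define ñ_j(θ) = −i V(θ)† ∂_j V(θ) for j = 1,2,3. Then pointwise on ℝ^3: tr(ñ_1 ∂_2 ñ_3) = ∂_3 tr(ñ_1 ñ_2) − tr(ñ_2 ∂_3 ñ_1) − i · tr(ñ_1 (ñ_2 ñ_3 − ñ_3 ñ_2)). -/
open Matrix
open scoped Matrix.Norms.L2Operator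

/-- Partial derivative in the `j`-th coordinate of a matrix-valued function on `ℝ^m`. -/
noncomputable def matPderiv {N m : ℕ} (j : Fin m)
    (V : (Fin m → ℝ) → Matrix (Fin N) (Fin N) ℂ) (θ : Fin m → ℝ) :
    Matrix (Fin N) (Fin N) ℂ :=
  deriv (fun s => V (Function.update θ j s)) (θ j)

/-- Partial derivative in the `j`-th coordinate of a scalar function on `ℝ^m`. -/
noncomputable def scalPderiv {m : ℕ} (j : Fin m) (f : (Fin m → ℝ) → ℂ) (θ : Fin m → ℝ) : ℂ :=
  deriv (fun s => f (Function.update θ j s)) (θ j)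

/-- The connection-like matrix `ñ_j(θ) = −i V(θ)† ∂_j V(θ)`. -/
noncomputable def ntilde {N m : ℕ} (V : (Fin m → ℝ) → Matrix (Fin N) (Fin N) ℂ)
    (j : Fin m) (θ : Fin m → ℝ) : Matrix (Fin N) (Fin N) ℂ :=
  (-Complex.I) • ((V θ)ᴴ * matPderiv j V θ)


lemma pderiv_eq_fderiv' {F : Type*} [NormedAddCommGroup F] [NormedSpace ℝ F]
    {m : ℕ} (j : Fin m) (f : (Fin m → ℝ) → F) (θ : Fin m → ℝ)
    (h : DifferentiableAt ℝ f θ) :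
    deriv (fun s => f (Function.update θ j s)) (θ j) = fderiv ℝ f θ (Pi.single j 1) := by
  have hf : HasFDerivAt f (fderiv ℝ f θ) (Function.update θ j (θ j)) := by
    rw [Function.update_eq_self]; exact h.hasFDerivAt
  exact (hf.comp_hasDerivAt _ (hasDerivAt_update θ j (θ j))).deriv

noncomputable def conjTransposeCLM (N : ℕ) :
    Matrix (Fin N) (Fin N) ℂ →L[ℝ] Matrix (Fin N) (Fin N) ℂ :=
  LinearMap.toContinuousLinearMap
    { toFun := fun A => Aᴴ
      map_add' := fun A B => Matrix.conjTranspose_add A B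
      map_smul' := fun r A => by
        ext i j
        simp [Matrix.conjTranspose_apply, star_smul] }

@[simp] lemma conjTransposeCLM_apply {N : ℕ} (A : Matrix (Fin N) (Fin N) ℂ) :
    conjTransposeCLM N A = Aᴴ := rfl

noncomputable def traceCLMR (N : ℕ) : Matrix (Fin N) (Fin N) ℂ →L[ℝ] ℂ :=
  LinearMap.toContinuousLinearMap
    { toFun := Matrix.trace
      map_add' := fun A B => Matrix.trace_add A B
      map_smul' := fun r A => by simp }

@[simp] lemma traceCLMR_apply {N : ℕ} (A : Matrix (Fin N) (Fin N) ℂ) :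
    traceCLMR N A = Matrix.trace A := rfl

/-- For a twice continuously differentiable unitary-valued map `V` on `ℝ³`, with
`ñ_j = −i V†∂_j V` (indices `1,2,3` realized as `0,1,2 : Fin 3`), pointwise:
`tr(ñ₁ ∂₂ ñ₃) = ∂₃ tr(ñ₁ ñ₂) − tr(ñ₂ ∂₃ ñ₁) − i tr(ñ₁ [ñ₂, ñ₃])`. -/
theorem trace_ntilde_pderiv_identity {N : ℕ}
    (V : (Fin 3 → ℝ) → Matrix (Fin N) (Fin N) ℂ)
    (hV : ContDiff ℝ 2 V)
    (hunit : ∀ θ, (V θ)ᴴ * V θ = 1) :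
    ∀ θ : Fin 3 → ℝ,
      Matrix.trace (ntilde V 0 θ * matPderiv 1 (ntilde V 2) θ)
        = scalPderiv 2 (fun θ' => Matrix.trace (ntilde V 0 θ' * ntilde V 1 θ')) θ
          - Matrix.trace (ntilde V 1 θ * matPderiv 2 (ntilde V 0) θ)
          - Complex.I * Matrix.trace
              (ntilde V 0 θ * (ntilde V 1 θ * ntilde V 2 θ - ntilde V 2 θ * ntilde V 1 θ)) := by
  classical
  intro θ
  have hVd : Differentiable ℝ V := hV.differentiable two_ne_zero
  have hFc : ContDiff ℝ 1 (fderiv ℝ V) := hV.fderiv_right (le_refl 2)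
  have hFd : Differentiable ℝ (fderiv ℝ V) := hFc.differentiable one_ne_zero
  set e : Fin 3 → (Fin 3 → ℝ) := fun j => Pi.single j 1 with he
  -- the j-th partial derivative of V
  set P : Fin 3 → (Fin 3 → ℝ) → Matrix (Fin N) (Fin N) ℂ :=
    fun j θ' => fderiv ℝ V θ' (e j) with hP
  -- ntilde in terms of P
  have hnt : ∀ j, ntilde V j = fun θ' => (-Complex.I) • ((V θ')ᴴ * P j θ') := by
    intro j; funext θ'
    simp only [ntilde, matPderiv, hP]
    rw [pderiv_eq_fderiv' j V θ' (hVd θ')]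
  -- P j is differentiable, with explicit derivative
  have hPd : ∀ j θ', HasFDerivAt (P j)
      ((ContinuousLinearMap.apply ℝ (Matrix (Fin N) (Fin N) ℂ) (e j)).comp
        (fderiv ℝ (fderiv ℝ V) θ')) θ' := by
    intro j θ'
    exact ((ContinuousLinearMap.apply ℝ (Matrix (Fin N) (Fin N) ℂ) (e j)).hasFDerivAt).comp θ'
      (hFd θ').hasFDerivAt
  -- V† is differentiable
  have hWd : ∀ θ', HasFDerivAt (fun θ'' => (V θ'')ᴴ)
      ((conjTransposeCLM N).comp (fderiv ℝ V θ')) θ' := by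
    intro θ'
    exact ((conjTransposeCLM N).hasFDerivAt).comp θ' (hVd θ').hasFDerivAt
  -- explicit derivative of ntilde at θ
  have hnd : ∀ j : Fin 3, HasFDerivAt (ntilde V j)
      ((-Complex.I) • ((V θ)ᴴ • ((ContinuousLinearMap.apply ℝ (Matrix (Fin N) (Fin N) ℂ) (e j)).comp
          (fderiv ℝ (fderiv ℝ V) θ))
        + ((conjTransposeCLM N).comp (fderiv ℝ V θ)).smulRight (P j θ))) θ := by
    intro j
    rw [hnt j]
    exact ((hWd θ).mul' (hPd j θ)).const_smul (-Complex.I)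
  have hndf : ∀ j : Fin 3, HasFDerivAt (ntilde V j) (fderiv ℝ (ntilde V j) θ) θ :=
    fun j => (hnd j).differentiableAt.hasFDerivAt
  have hmp : ∀ a j : Fin 3, matPderiv a (ntilde V j) θ = fderiv ℝ (ntilde V j) θ (e a) := by
    intro a j
    exact pderiv_eq_fderiv' a (ntilde V j) θ (hnd j).differentiableAt
  -- value of the derivative of ntilde in direction e a
  have hDval : ∀ a b : Fin 3, matPderiv a (ntilde V b) θ
      = (-Complex.I) • ((V θ)ᴴ * (fderiv ℝ (fderiv ℝ V) θ (e a) (e b)) + (P a θ)ᴴ * P b θ) := by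
    intro a b
    rw [hmp a b, (hnd b).fderiv]
    simp [ContinuousLinearMap.smul_apply, ContinuousLinearMap.add_apply,
      ContinuousLinearMap.smulRight_apply, ContinuousLinearMap.comp_apply,
      ContinuousLinearMap.apply_apply, smul_eq_mul, hP]
  -- symmetry of second derivatives
  have hsymm : fderiv ℝ (fderiv ℝ V) θ (e 1) (e 2) = fderiv ℝ (fderiv ℝ V) θ (e 2) (e 1) :=
    second_derivative_symmetric (fun y => (hVd y).hasFDerivAt) (hFd θ).hasFDerivAt _ _
  -- unitarity relations
  have hU2 : V θ * (V θ)ᴴ = 1 := mul_eq_one_comm.mp (hunit θ)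
  have hrel : ∀ a : Fin 3, (V θ)ᴴ * P a θ + (P a θ)ᴴ * V θ = 0 := by
    intro a
    have h1 : HasFDerivAt (fun θ' => (V θ')ᴴ * V θ')
        ((V θ)ᴴ • (fderiv ℝ V θ)
          + ((conjTransposeCLM N).comp (fderiv ℝ V θ)).smulRight (V θ)) θ :=
      (hWd θ).mul' (hVd θ).hasFDerivAt
    have heq : (fun θ' => (V θ')ᴴ * V θ') = fun _ => (1 : Matrix (Fin N) (Fin N) ℂ) :=
      funext hunit
    rw [heq] at h1
    have h0 := h1.unique (hasFDerivAt_const _ _)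
    have h2 := congrArg (fun L : (Fin 3 → ℝ) →L[ℝ] Matrix (Fin N) (Fin N) ℂ => L (e a)) h0
    simpa [ContinuousLinearMap.smul_apply, ContinuousLinearMap.add_apply,
      ContinuousLinearMap.smulRight_apply, ContinuousLinearMap.comp_apply,
      smul_eq_mul, hP] using h2
  have hAP : ∀ a : Fin 3, (V θ)ᴴ * P a θ = -((P a θ)ᴴ * V θ) :=
    fun a => eq_neg_of_add_eq_zero_left (hrel a)
  -- products of ntilde
  have hprod : ∀ a b : Fin 3, ntilde V a θ * ntilde V b θ = (P a θ)ᴴ * P b θ := by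
    intro a b
    have ha := congrFun (hnt a) θ
    have hb := congrFun (hnt b) θ
    rw [ha, hb, smul_mul_smul_comm]
    have : (-Complex.I) * (-Complex.I) = (-1 : ℂ) := by
      simp [Complex.I_mul_I]
    rw [this, neg_one_smul]
    rw [hAP a, neg_mul, neg_neg, mul_assoc ((P a θ)ᴴ) (V θ), ← mul_assoc (V θ), hU2, one_mul]
  -- key curvature identity
  have hkey : matPderiv 1 (ntilde V 2) θ = matPderiv 2 (ntilde V 1) θ
      + (-Complex.I) • (ntilde V 1 θ * ntilde V 2 θ - ntilde V 2 θ * ntilde V 1 θ) := by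
    rw [hDval 1 2, hDval 2 1, hprod 1 2, hprod 2 1, hsymm]
    simp only [smul_add, smul_sub]
    abel
  -- derivative of the scalar trace
  have hscal : scalPderiv 2 (fun θ' => Matrix.trace (ntilde V 0 θ' * ntilde V 1 θ')) θ
      = Matrix.trace (matPderiv 2 (ntilde V 0) θ * ntilde V 1 θ)
        + Matrix.trace (ntilde V 0 θ * matPderiv 2 (ntilde V 1) θ) := by
    have hg := (hndf 0).mul' (hndf 1)
    have ht : HasFDerivAt (fun θ' => Matrix.trace (ntilde V 0 θ' * ntilde V 1 θ'))
        ((traceCLMR N).comp (ntilde V 0 θ • fderiv ℝ (ntilde V 1) θ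
          + (fderiv ℝ (ntilde V 0) θ).smulRight (ntilde V 1 θ))) θ :=
      ((traceCLMR N).hasFDerivAt).comp θ hg
    have hval : scalPderiv 2 (fun θ' => Matrix.trace (ntilde V 0 θ' * ntilde V 1 θ')) θ
        = ((traceCLMR N).comp (ntilde V 0 θ • fderiv ℝ (ntilde V 1) θ
            + (fderiv ℝ (ntilde V 0) θ).smulRight (ntilde V 1 θ))) (e 2) := by
      rw [scalPderiv, pderiv_eq_fderiv' 2 _ θ ht.differentiableAt, ht.fderiv]
    rw [hval, hmp 2 0, hmp 2 1]
    simp [ContinuousLinearMap.smul_apply, ContinuousLinearMap.add_apply,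
      ContinuousLinearMap.smulRight_apply, ContinuousLinearMap.comp_apply,
      smul_eq_mul, Matrix.trace_add, add_comm]
  -- finish
  rw [hkey, hscal, Matrix.trace_mul_comm (matPderiv 2 (ntilde V 0) θ) (ntilde V 1 θ)]
  simp only [mul_add, Matrix.trace_add, mul_smul_comm, Matrix.trace_smul, smul_eq_mul]
  ring
end

section
/- Let U : ℝ × ℝ → Matrix (Fin N) (Fin N) ℂ be twice continuously differentiable with U(t,θ) unitary for all (t,θ), and define H(t,θ) = i (∂_t U)(t,θ) · U(t,θ)†. Then H(t,θ) is Hermitian and the following identity holds pointwise: −U† (∂_θ H) U = −i ∂_θ (U† ∂_t U) + i ( (∂_θ U†)(∂_t U) − (∂_t U†)(∂_θ U) ). (The instantaneous pumped power operator equals a total derivative plus a Berry-curvature term.) -/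
open Matrix
open scoped Matrix.Norms.L2Operator

/-- Partial derivative in the first argument (time) of a matrix-valued function on `ℝ × ℝ`. -/
noncomputable def pdT {N : ℕ} (U : ℝ × ℝ → Matrix (Fin N) (Fin N) ℂ) (p : ℝ × ℝ) :
    Matrix (Fin N) (Fin N) ℂ :=
  deriv (fun s => U (s, p.2)) p.1

/-- Partial derivative in the second argument (phase) of a matrix-valued function on `ℝ × ℝ`. -/
noncomputable def pdTheta {N : ℕ} (U : ℝ × ℝ → Matrix (Fin N) (Fin N) ℂ) (p : ℝ × ℝ) :
    Matrix (Fin N) (Fin N) ℂ :=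
  deriv (fun s => U (p.1, s)) p.2

/-- The Hamiltonian `H = i (∂ₜ U) U†` generating the unitary family `U`. -/
noncomputable def genHam {N : ℕ} (U : ℝ × ℝ → Matrix (Fin N) (Fin N) ℂ) (p : ℝ × ℝ) :
    Matrix (Fin N) (Fin N) ℂ :=
  Complex.I • (pdT U p * (U p)ᴴ)

noncomputable def ctCLM (N : ℕ) :
    Matrix (Fin N) (Fin N) ℂ →L[ℝ] Matrix (Fin N) (Fin N) ℂ :=
  LinearMap.toContinuousLinearMap
    { toFun := conjTranspose
      map_add' := fun M M' => conjTranspose_add M M'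
      map_smul' := fun r M => by
        ext i j
        simp [conjTranspose_apply, Matrix.smul_apply, Complex.real_smul] }

@[simp] lemma ctCLM_apply {N : ℕ} (M : Matrix (Fin N) (Fin N) ℂ) : ctCLM N M = Mᴴ := rfl

lemma hasDerivAt_theta {E : Type*} [NormedAddCommGroup E] [NormedSpace ℝ E]
    {f : ℝ × ℝ → E} {p : ℝ × ℝ} (hf : DifferentiableAt ℝ f p) :
    HasDerivAt (fun s => f (p.1, s)) (fderiv ℝ f p ((0:ℝ),(1:ℝ))) p.2 := by
  have h1 : HasDerivAt (fun s : ℝ => ((p.1 : ℝ), s)) ((0:ℝ),(1:ℝ)) p.2 :=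
    (hasDerivAt_const _ _).prodMk (hasDerivAt_id _)
  have h2 := hf.hasFDerivAt.comp_hasDerivAt p.2 (by simpa using h1)
  exact h2

lemma hasDerivAt_t {E : Type*} [NormedAddCommGroup E] [NormedSpace ℝ E]
    {f : ℝ × ℝ → E} {p : ℝ × ℝ} (hf : DifferentiableAt ℝ f p) :
    HasDerivAt (fun t => f (t, p.2)) (fderiv ℝ f p ((1:ℝ),(0:ℝ))) p.1 := by
  have h1 : HasDerivAt (fun t : ℝ => (t, (p.2 : ℝ))) ((1:ℝ),(0:ℝ)) p.1 :=
    (hasDerivAt_id _).prodMk (hasDerivAt_const _ _)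
  have h2 := hf.hasFDerivAt.comp_hasDerivAt p.1 (by simpa using h1)
  exact h2

/-- For a twice continuously differentiable unitary-valued family `U(t,θ)` with Hamiltonian
`H = i(∂ₜU)U†`: `H` is Hermitian and the instantaneous pumped power operator equals a total
derivative plus a Berry-curvature term:
`−U†(∂_θ H)U = −i ∂_θ(U†∂ₜU) + i((∂_θU†)(∂ₜU) − (∂ₜU†)(∂_θU))`. -/
theorem pumped_power_eq_total_derivative_plus_berry_curvature {N : ℕ}
    (U : ℝ × ℝ → Matrix (Fin N) (Fin N) ℂ)
    (hU : ContDiff ℝ 2 U)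
    (hunit : ∀ p : ℝ × ℝ, (U p)ᴴ * U p = 1) :
    (∀ p : ℝ × ℝ, (genHam U p)ᴴ = genHam U p) ∧
    ∀ p : ℝ × ℝ,
      -((U p)ᴴ * pdTheta (genHam U) p * U p)
        = (-Complex.I) • pdTheta (fun q => (U q)ᴴ * pdT U q) p
          + Complex.I • (pdTheta (fun q => (U q)ᴴ) p * pdT U p
              - pdT (fun q => (U q)ᴴ) p * pdTheta U p) := by
  have hUd : Differentiable ℝ U := hU.differentiable (by norm_num)
  have hpdT_eq : pdT U = fun q => fderiv ℝ U q ((1:ℝ),(0:ℝ)) := by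
    funext q
    exact (hasDerivAt_t (hUd q)).deriv
  have hfd : ContDiff ℝ 1 (fun q => fderiv ℝ U q) := hU.fderiv_right (by norm_num)
  have hpdTc : ContDiff ℝ 1 (pdT U) := by
    rw [hpdT_eq]; exact hfd.clm_apply contDiff_const
  have hpdTd : Differentiable ℝ (pdT U) := hpdTc.differentiable one_ne_zero
  -- HasDerivAt facts along the t-line
  have hUt : ∀ p : ℝ × ℝ, HasDerivAt (fun t => U (t, p.2)) (pdT U p) p.1 := by
    intro p
    have := hasDerivAt_t (hUd p)
    rwa [hpdT_eq]
  have hCtT : ∀ p : ℝ × ℝ, HasDerivAt (fun t => (U (t, p.2))ᴴ) ((pdT U p)ᴴ) p.1 := by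
    intro p
    have := (ctCLM N).hasFDerivAt.comp_hasDerivAt p.1 (hUt p)
    exact this
  -- HasDerivAt facts along the θ-line
  have hUth : ∀ p : ℝ × ℝ, HasDerivAt (fun s => U (p.1, s)) (pdTheta U p) p.2 := by
    intro p
    have h := hasDerivAt_theta (hUd p)
    have he : pdTheta U p = fderiv ℝ U p ((0:ℝ),(1:ℝ)) := h.deriv
    rwa [he]
  have hCth : ∀ p : ℝ × ℝ, HasDerivAt (fun s => (U (p.1, s))ᴴ) ((pdTheta U p)ᴴ) p.2 := by
    intro p
    have := (ctCLM N).hasFDerivAt.comp_hasDerivAt p.2 (hUth p)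
    exact this
  have hAth : ∀ p : ℝ × ℝ,
      HasDerivAt (fun s => pdT U (p.1, s)) (pdTheta (pdT U) p) p.2 := by
    intro p
    have h := hasDerivAt_theta (hpdTd p)
    have he : pdTheta (pdT U) p = fderiv ℝ (pdT U) p ((0:ℝ),(1:ℝ)) := h.deriv
    rwa [he]
  -- differentiating unitarity
  have keyT : ∀ p : ℝ × ℝ, (pdT U p)ᴴ * U p + (U p)ᴴ * pdT U p = 0 := by
    intro p
    have hm : HasDerivAt (fun t => (U (t, p.2))ᴴ * U (t, p.2))
        ((pdT U p)ᴴ * U (p.1, p.2) + (U (p.1, p.2))ᴴ * pdT U p) p.1 := (hCtT p).mul (hUt p)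
    have hc : HasDerivAt (fun t => (U (t, p.2))ᴴ * U (t, p.2)) 0 p.1 := by
      have : (fun t => (U (t, p.2))ᴴ * U (t, p.2)) = fun _ => (1 : Matrix (Fin N) (Fin N) ℂ) := by
        funext t; exact hunit (t, p.2)
      rw [this]; exact hasDerivAt_const _ _
    simpa using hm.unique hc
  have keyTh : ∀ p : ℝ × ℝ, (pdTheta U p)ᴴ * U p + (U p)ᴴ * pdTheta U p = 0 := by
    intro p
    have hm := (hCth p).mul (hUth p)
    have hc : HasDerivAt (fun s => (U (p.1, s))ᴴ * U (p.1, s)) 0 p.2 := by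
      have : (fun s => (U (p.1, s))ᴴ * U (p.1, s)) = fun _ => (1 : Matrix (Fin N) (Fin N) ℂ) := by
        funext s; exact hunit (p.1, s)
      rw [this]; exact hasDerivAt_const _ _
    simpa using hm.unique hc
  have hUUc : ∀ p : ℝ × ℝ, U p * (U p)ᴴ = 1 := fun p => mul_eq_one_comm.mp (hunit p)
  constructor
  · -- Hermiticity
    intro p
    have ha2 : (U p)ᴴ * pdT U p = -((pdT U p)ᴴ * U p) := by
      have h := keyT p
      rw [add_comm] at h
      exact add_eq_zero_iff_eq_neg.mp h
    have hflip : U p * (pdT U p)ᴴ = -(pdT U p * (U p)ᴴ) := by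
      calc U p * (pdT U p)ᴴ
          = U p * ((pdT U p)ᴴ * (U p * (U p)ᴴ)) := by rw [hUUc p, mul_one]
        _ = U p * (((pdT U p)ᴴ * U p) * (U p)ᴴ) := by rw [mul_assoc]
        _ = U p * ((-((U p)ᴴ * pdT U p)) * (U p)ᴴ) := by
            rw [show (pdT U p)ᴴ * U p = -((U p)ᴴ * pdT U p) from
              add_eq_zero_iff_eq_neg.mp (keyT p)]
        _ = -(U p * ((U p)ᴴ * (pdT U p * (U p)ᴴ))) := by
            simp [mul_assoc]
        _ = -((U p * (U p)ᴴ) * (pdT U p * (U p)ᴴ)) := by rw [mul_assoc]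
        _ = -(pdT U p * (U p)ᴴ) := by rw [hUUc p, one_mul]
    rw [genHam, conjTranspose_smul, conjTranspose_mul, conjTranspose_conjTranspose]
    rw [hflip]
    simp [Complex.star_def, Complex.conj_I]
  · intro p
    set V := U p with hV
    set A := pdT U p with hA
    set B := pdTheta U p with hB
    set A' := pdTheta (pdT U) p with hA'
    have e1 : pdTheta (fun q => (U q)ᴴ) p = Bᴴ := (hCth p).deriv
    have e2 : pdT (fun q => (U q)ᴴ) p = Aᴴ := (hCtT p).deriv
    have e3 : pdTheta (genHam U) p = Complex.I • (A' * Vᴴ + A * Bᴴ) := by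
      have hH : HasDerivAt (fun s => genHam U (p.1, s))
          (Complex.I • (A' * (U (p.1, p.2))ᴴ + pdT U (p.1, p.2) * Bᴴ)) p.2 :=
        ((hAth p).mul (hCth p)).const_smul Complex.I
      exact hH.deriv
    have e4 : pdTheta (fun q => (U q)ᴴ * pdT U q) p = Bᴴ * A + Vᴴ * A' := by
      have hm : HasDerivAt (fun s => (U (p.1, s))ᴴ * pdT U (p.1, s))
          (Bᴴ * pdT U (p.1, p.2) + (U (p.1, p.2))ᴴ * A') p.2 := (hCth p).mul (hAth p)
      exact hm.deriv
    rw [e1, e2, e3, e4]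
    have hu : Vᴴ * V = 1 := hunit p
    have hv : V * Vᴴ = 1 := hUUc p
    have ha2 : Vᴴ * A = -(Aᴴ * V) := by
      have h := keyT p
      rw [add_comm] at h
      exact add_eq_zero_iff_eq_neg.mp h
    have hb2 : Bᴴ * V = -(Vᴴ * B) := add_eq_zero_iff_eq_neg.mp (keyTh p)
    have key : Vᴴ * (A * (Bᴴ * V)) = Aᴴ * B := by
      calc Vᴴ * (A * (Bᴴ * V)) = (Vᴴ * A) * (Bᴴ * V) := by rw [mul_assoc]
        _ = (-(Aᴴ * V)) * (-(Vᴴ * B)) := by rw [ha2, hb2]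
        _ = Aᴴ * (V * (Vᴴ * B)) := by rw [neg_mul_neg, mul_assoc]
        _ = Aᴴ * ((V * Vᴴ) * B) := by rw [mul_assoc]
        _ = Aᴴ * B := by rw [hv, one_mul]
    have hX : Vᴴ * (A' * Vᴴ + A * Bᴴ) * V = Vᴴ * A' + Aᴴ * B := by
      calc Vᴴ * (A' * Vᴴ + A * Bᴴ) * V
          = Vᴴ * (A' * (Vᴴ * V)) + Vᴴ * (A * (Bᴴ * V)) := by
            simp only [mul_add, add_mul, mul_assoc]
        _ = Vᴴ * A' + Aᴴ * B := by rw [hu, mul_one, key]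
    rw [mul_smul_comm, smul_mul_assoc, hX]
    simp only [smul_add, smul_sub, neg_smul, neg_add]
    abel
end

section
/- Let V : ℝ^3 → Matrix (Fin N) (Fin N) ℂ be continuously differentiable, 2π-periodic in each coordinate, with V(θ) unitary for every θ; let H_F be Hermitian, Ω, θ_0 ∈ ℝ^3, θ_t = Ω t + θ_0, and U(t) = V(θ_t) e^{−itH_F} V(θ_0)†. Then the frequency-lattice displacement Δn_j(t) = −i U(t)† ∂_{θ_{0j}} U(t) is uniformly bounded in time: there is a constant C (depending only on V) such that ‖Δn_j(t)‖ ≤ C for all t ∈ ℝ, all j ∈ {1,2,3}, and all θ_0 ∈ ℝ^3. (In a localized phase the photon transfer to each drive remains bounded for all time.) -/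
set_option maxHeartbeats 1000000


open Matrix
open scoped Matrix.Norms.L2Operator

/-- The Floquet-decomposed propagator `U(t) = V(Ωt + θ₀) e^{−itH_F} V(θ₀)†`, viewed as a
function of the initial phase `θ₀` (its second argument). -/
noncomputable def floquetU {N : ℕ} (V : (Fin 3 → ℝ) → Matrix (Fin N) (Fin N) ℂ)
    (HF : Matrix (Fin N) (Fin N) ℂ) (Ω : Fin 3 → ℝ) (t : ℝ) (φ : Fin 3 → ℝ) :
    Matrix (Fin N) (Fin N) ℂ :=
  V (t • Ω + φ) * NormedSpace.exp ((-(Complex.I * (t : ℂ))) • HF) * (V φ)ᴴ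


section Aux

variable {N : ℕ}

lemma update_eq_add_single (θ : Fin 3 → ℝ) (k : Fin 3) (c : ℝ) :
    Function.update θ k (θ k + c) = θ + c • (Pi.single k 1 : Fin 3 → ℝ) := by
  funext i
  by_cases h : i = k
  · subst h; simp
  · simp [Function.update_of_ne h, Pi.single_eq_of_ne h]

lemma hasDerivAt_update' (V : (Fin 3 → ℝ) → Matrix (Fin N) (Fin N) ℂ)
    (hV : ContDiff ℝ 1 V) (θ : Fin 3 → ℝ) (j : Fin 3) (s₀ : ℝ) :
    HasDerivAt (fun s => V (Function.update θ j s))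
      (fderiv ℝ V (Function.update θ j s₀) (Pi.single j 1)) s₀ := by
  have hline : HasDerivAt (fun s : ℝ => Function.update θ j s) (Pi.single j 1) s₀ := by
    have h1 : (fun s : ℝ => Function.update θ j s)
        = fun s : ℝ => Function.update θ j 0 + s • (Pi.single j 1 : Fin 3 → ℝ) := by
      funext s i
      by_cases h : i = j
      · subst h; simp
      · simp [Function.update_of_ne h, Pi.single_eq_of_ne h]
    rw [h1]
    simpa using ((hasDerivAt_id s₀).smul_const ((Pi.single j 1 : Fin 3 → ℝ))).const_add
      (Function.update θ j 0)
  have hVd : HasFDerivAt V (fderiv ℝ V (Function.update θ j s₀)) (Function.update θ j s₀) :=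
    (hV.differentiable one_ne_zero (Function.update θ j s₀)).hasFDerivAt
  exact (hVd.comp_hasDerivAt s₀ hline)

lemma matPderiv_eq_fderiv (V : (Fin 3 → ℝ) → Matrix (Fin N) (Fin N) ℂ)
    (hV : ContDiff ℝ 1 V) (j : Fin 3) (θ : Fin 3 → ℝ) :
    matPderiv j V θ = fderiv ℝ V θ (Pi.single j 1) := by
  have := (hasDerivAt_update' V hV θ j (θ j)).deriv
  rwa [Function.update_eq_self] at this

/-- A continuous function on `ℝ³` that is `2π`-periodic in each coordinate is bounded. -/
lemma bounded_of_periodic {X : Type*} [NormedAddCommGroup X]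
    (f : (Fin 3 → ℝ) → X) (hf : Continuous f)
    (hp : ∀ (k : Fin 3) (θ : Fin 3 → ℝ), f (Function.update θ k (θ k + 2 * Real.pi)) = f θ) :
    ∃ C : ℝ, 0 ≤ C ∧ ∀ θ, ‖f θ‖ ≤ C := by
  -- integer periodicity
  have hpz : ∀ (k : Fin 3) (z : ℤ) (θ : Fin 3 → ℝ),
      f (Function.update θ k (θ k + 2 * Real.pi * z)) = f θ := by
    intro k z
    induction z using Int.induction_on with
    | zero => intro θ; simp
    | succ n ih =>
        intro θ
        have h1 : Function.update θ k (θ k + 2 * Real.pi * ((n : ℤ) + 1 : ℤ))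
            = Function.update (Function.update θ k (θ k + 2 * Real.pi * (n : ℤ))) k
              ((Function.update θ k (θ k + 2 * Real.pi * (n : ℤ))) k + 2 * Real.pi) := by
          rw [Function.update_self, Function.update_idem]
          push_cast; ring_nf
        rw [h1, hp, ih]
    | pred n ih =>
        intro θ
        have h1 : Function.update θ k (θ k + 2 * Real.pi * (-(n : ℤ) - 1 : ℤ))
            = Function.update θ k (θ k + 2 * Real.pi * (-(n : ℤ) - 1 : ℤ)) := rfl
        -- express f θ' with θ' := update θ k (θ k + 2π(-n-1)); then update once more gives level -n
        have h2 : Function.update (Function.update θ k (θ k + 2 * Real.pi * (-(n : ℤ) - 1 : ℤ))) k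
              ((Function.update θ k (θ k + 2 * Real.pi * (-(n : ℤ) - 1 : ℤ))) k + 2 * Real.pi)
            = Function.update θ k (θ k + 2 * Real.pi * (-(n : ℤ) : ℤ)) := by
          rw [Function.update_self, Function.update_idem]
          push_cast; ring_nf
        have := hp k (Function.update θ k (θ k + 2 * Real.pi * (-(n : ℤ) - 1 : ℤ)))
        rw [h2] at this
        rw [← this, ih]
  -- reduce any point into the fundamental cube via coordinatewise reduction
  set r : ℝ → ℝ := fun x => x + 2 * Real.pi * (-⌊x / (2 * Real.pi)⌋ : ℤ) with hr
  have hrmem : ∀ x, r x ∈ Set.Icc (0:ℝ) (2 * Real.pi) := by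
    intro x
    have h2π : (0:ℝ) < 2 * Real.pi := by positivity
    have h1 := Int.fract_nonneg (x / (2 * Real.pi))
    have h2 := Int.fract_lt_one (x / (2 * Real.pi))
    have hfr : r x = 2 * Real.pi * Int.fract (x / (2 * Real.pi)) := by
      rw [hr]; rw [Int.fract]
      field_simp
      push_cast
      ring
    constructor
    · rw [hfr]; positivity
    · rw [hfr]
      calc 2 * Real.pi * Int.fract (x / (2 * Real.pi)) ≤ 2 * Real.pi * 1 := by
            exact mul_le_mul_of_nonneg_left h2.le h2π.le
        _ = 2 * Real.pi := by ring
  have hred : ∀ (s : Finset (Fin 3)) (θ : Fin 3 → ℝ),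
      f (fun k => if k ∈ s then r (θ k) else θ k) = f θ := by
    intro s
    induction s using Finset.induction_on with
    | empty => intro θ; simp
    | @insert j s' hj ih =>
        intro θ
        have key : (fun k => if k ∈ insert j s' then r (θ k) else θ k)
            = Function.update (fun k => if k ∈ s' then r (θ k) else θ k) j
              ((fun k => if k ∈ s' then r (θ k) else θ k) j + 2 * Real.pi * (-⌊θ j / (2 * Real.pi)⌋ : ℤ)) := by
          funext i
          by_cases h : i = j
          · subst h
            simp [Function.update_self, if_neg hj, hr]
          · simp [Function.update_of_ne h, Finset.mem_insert, h]
        rw [key, hpz, ih]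
  obtain ⟨θmax, _, hmax⟩ := (isCompact_univ_pi (fun _ : Fin 3 =>
      isCompact_Icc (a := (0:ℝ)) (b := 2 * Real.pi))).exists_isMaxOn
    (Set.univ_pi_nonempty_iff.2 (fun _ => ⟨0, by constructor <;> positivity⟩))
    (hf.norm.continuousOn)
  refine ⟨‖f θmax‖, norm_nonneg _, fun θ => ?_⟩
  have h1 : f θ = f (fun k => r (θ k)) := by
    have := hred Finset.univ θ
    simpa using this.symm
  rw [h1]
  exact hmax (Set.mem_univ_pi.2 fun k => hrmem (θ k))

end Aux

section Aux2

variable {N : ℕ}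

lemma fderiv_periodic (V : (Fin 3 → ℝ) → Matrix (Fin N) (Fin N) ℂ)
    (hV : ContDiff ℝ 1 V)
    (hper : ∀ (j : Fin 3) (θ : Fin 3 → ℝ), V (Function.update θ j (θ j + 2 * Real.pi)) = V θ)
    (k : Fin 3) (θ : Fin 3 → ℝ) :
    fderiv ℝ V (Function.update θ k (θ k + 2 * Real.pi)) = fderiv ℝ V θ := by
  set c : Fin 3 → ℝ := (2 * Real.pi) • (Pi.single k 1 : Fin 3 → ℝ) with hc
  have hVc : ∀ x, V (x + c) = V x := by
    intro x
    rw [hc, ← update_eq_add_single]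
    exact hper k x
  have hT : HasFDerivAt (fun x : Fin 3 → ℝ => x + c)
      (ContinuousLinearMap.id ℝ (Fin 3 → ℝ)) θ := (hasFDerivAt_id θ).add_const c
  have hVd : HasFDerivAt V (fderiv ℝ V (θ + c)) (θ + c) :=
    (hV.differentiable one_ne_zero (θ + c)).hasFDerivAt
  have hcomp : HasFDerivAt (fun x => V (x + c))
      ((fderiv ℝ V (θ + c)).comp (ContinuousLinearMap.id ℝ (Fin 3 → ℝ))) θ :=
    hVd.comp θ hT
  have heq : (fun x => V (x + c)) = V := funext hVc
  rw [heq, ContinuousLinearMap.comp_id] at hcomp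
  have h1 : fderiv ℝ V θ = fderiv ℝ V (θ + c) := hcomp.fderiv.symm ▸ rfl
  rw [update_eq_add_single, ← hc, ← h1]

lemma norm_le_one_of_unitary {M : Matrix (Fin N) (Fin N) ℂ} (h : Mᴴ * M = 1) : ‖M‖ ≤ 1 := by
  have h1 : ‖M‖ * ‖M‖ = ‖(1 : Matrix (Fin N) (Fin N) ℂ)‖ := by
    rw [← Matrix.l2_opNorm_conjTranspose_mul_self, h]
  have h2 : ‖(1 : Matrix (Fin N) (Fin N) ℂ)‖ ≤ 1 := by
    rw [Matrix.cstar_norm_def, _root_.map_one]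
    exact ContinuousLinearMap.norm_id_le
  nlinarith [norm_nonneg M]

end Aux2


/-- In a localized phase (defined by the existence of the Floquet decomposition
`U(t) = V(θ_t)e^{−itH_F}V(θ₀)†` with `V` continuously differentiable, `2π`-periodic and
unitary-valued), the frequency-lattice displacement `Δn_j(t) = −i U(t)† ∂_{θ₀ⱼ} U(t)` is
uniformly bounded in operator norm, with a constant independent of `t`, `j`, and `θ₀`:
the photon transfer to each drive remains bounded for all time. -/
theorem freq_lattice_displacement_bounded {N : ℕ}
    (V : (Fin 3 → ℝ) → Matrix (Fin N) (Fin N) ℂ)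
    (hV : ContDiff ℝ 1 V)
    (hper : ∀ (j : Fin 3) (θ : Fin 3 → ℝ), V (Function.update θ j (θ j + 2 * Real.pi)) = V θ)
    (hunit : ∀ θ, (V θ)ᴴ * V θ = 1)
    (HF : Matrix (Fin N) (Fin N) ℂ) (hHF : HFᴴ = HF)
    (Ω : Fin 3 → ℝ) :
    ∃ C : ℝ, ∀ (t : ℝ) (j : Fin 3) (θ₀ : Fin 3 → ℝ),
      ‖(-Complex.I) • ((floquetU V HF Ω t θ₀)ᴴ * matPderiv j (floquetU V HF Ω t) θ₀)‖ ≤ C := by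
  -- bound on the derivative of V, uniform over ℝ³
  obtain ⟨Cf, hCf0, hCf⟩ := bounded_of_periodic (fun θ => fderiv ℝ V θ)
    (hV.continuous_fderiv one_ne_zero)
    (fun k θ => fderiv_periodic V hV hper k θ)
  have hpd : ∀ (j : Fin 3) (θ : Fin 3 → ℝ), ‖matPderiv j V θ‖ ≤ Cf := by
    intro j θ
    rw [matPderiv_eq_fderiv V hV]
    calc ‖fderiv ℝ V θ (Pi.single j 1)‖
        ≤ ‖fderiv ℝ V θ‖ * ‖(Pi.single j 1 : Fin 3 → ℝ)‖ :=
          (fderiv ℝ V θ).le_opNorm _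
      _ ≤ Cf * 1 := by
          apply mul_le_mul (hCf θ) ?_ (norm_nonneg _) hCf0
          apply pi_norm_le_iff_of_nonneg zero_le_one |>.2
          intro i
          by_cases h : i = j
          · subst h; simp
          · simp [Pi.single_eq_of_ne h]
      _ = Cf := mul_one Cf
  refine ⟨2 * Cf, fun t j θ₀ => ?_⟩
  set E : Matrix (Fin N) (Fin N) ℂ := NormedSpace.exp ((-(Complex.I * (t : ℂ))) • HF) with hE
  -- E is unitary
  have hEunit : Eᴴ * E = 1 := by
    set M : Matrix (Fin N) (Fin N) ℂ := (-(Complex.I * (t : ℂ))) • HF with hM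
    have h1 : Mᴴ = -M := by
      rw [hM, Matrix.conjTranspose_smul, hHF, ← neg_smul]
      congr 1
      simp [Complex.ext_iff]
    have e1 : Eᴴ = NormedSpace.exp (-M) := by
      rw [← h1, hE]
      exact (Matrix.exp_conjTranspose M).symm
    have e2 : NormedSpace.exp ((-M) + M)
        = NormedSpace.exp (-M) * NormedSpace.exp M :=
      Matrix.exp_add_of_commute _ _ ((Commute.refl M).neg_left)
    have e3 : NormedSpace.exp ((-M) + M) = 1 := by
      rw [neg_add_cancel]
      exact NormedSpace.exp_zero
    rw [e1, hE, ← e2, e3]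
  have hEnorm : ‖E‖ ≤ 1 := norm_le_one_of_unitary hEunit
  have hVnorm : ∀ θ, ‖V θ‖ ≤ 1 := fun θ => norm_le_one_of_unitary (hunit θ)
  have hVHnorm : ∀ θ, ‖(V θ)ᴴ‖ ≤ 1 := fun θ => by
    rw [Matrix.l2_opNorm_conjTranspose]; exact hVnorm θ
  set Θ : Fin 3 → ℝ := t • Ω + θ₀ with hΘ
  -- derivative of the first factor
  have h1 : HasDerivAt (fun s => V (t • Ω + Function.update θ₀ j s))
      (matPderiv j V Θ) (θ₀ j) := by
    have haux : ∀ s : ℝ, t • Ω + Function.update θ₀ j s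
        = Function.update Θ j (t * Ω j + s) := by
      intro s
      funext i
      by_cases h : i = j
      · subst h; simp [hΘ]
      · simp [Function.update_of_ne h, hΘ]
    have hshift : HasDerivAt (fun s : ℝ => t * Ω j + s) 1 (θ₀ j) :=
      (hasDerivAt_id (θ₀ j)).const_add (t * Ω j)
    have houter := hasDerivAt_update' V hV Θ j (t * Ω j + θ₀ j)
    have hcomp := HasDerivAt.scomp (θ₀ j) houter hshift
    have hΘj : Function.update Θ j (t * Ω j + θ₀ j) = Θ := by
      have : Θ j = t * Ω j + θ₀ j := by simp [hΘ]
      rw [← this, Function.update_eq_self]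
    rw [hΘj] at hcomp
    have : (fun s => V (t • Ω + Function.update θ₀ j s))
        = (fun s => V (Function.update Θ j s)) ∘ (fun s : ℝ => t * Ω j + s) := by
      funext s; simp [Function.comp, haux s]
    rw [this]
    simpa [matPderiv_eq_fderiv V hV] using hcomp
  -- derivative of the conjugate-transposed factor
  have h2 : HasDerivAt (fun s => (V (Function.update θ₀ j s))ᴴ)
      ((matPderiv j V θ₀)ᴴ) (θ₀ j) := by
    have := (hasDerivAt_update' V hV θ₀ j (θ₀ j)).star
    rw [Function.update_eq_self] at this
    simpa [matPderiv_eq_fderiv V hV, Matrix.star_eq_conjTranspose] using this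
  have hU : HasDerivAt (fun s => floquetU V HF Ω t (Function.update θ₀ j s))
      ((matPderiv j V Θ * E) * (V θ₀)ᴴ + (V Θ * E) * (matPderiv j V θ₀)ᴴ) (θ₀ j) := by
    have := (h1.mul_const E).mul h2
    simp only [Function.update_eq_self] at this
    simpa only [floquetU, ← hΘ, ← hE, Pi.mul_def] using this
  have hDval : matPderiv j (floquetU V HF Ω t) θ₀
      = (matPderiv j V Θ * E) * (V θ₀)ᴴ + (V Θ * E) * (matPderiv j V θ₀)ᴴ := by
    rw [matPderiv]
    exact hU.deriv
  -- norm bound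
  have hUnorm : ‖(floquetU V HF Ω t θ₀)ᴴ‖ ≤ 1 := by
    rw [Matrix.l2_opNorm_conjTranspose, floquetU]
    calc ‖V (t • Ω + θ₀) * NormedSpace.exp ((-(Complex.I * (t : ℂ))) • HF) * (V θ₀)ᴴ‖
        ≤ ‖V (t • Ω + θ₀) * NormedSpace.exp ((-(Complex.I * (t : ℂ))) • HF)‖ * ‖(V θ₀)ᴴ‖ :=
          Matrix.l2_opNorm_mul _ _
      _ ≤ (‖V (t • Ω + θ₀)‖ * ‖E‖) * ‖(V θ₀)ᴴ‖ := by
          apply mul_le_mul_of_nonneg_right (Matrix.l2_opNorm_mul _ _) (norm_nonneg _)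
      _ ≤ (1 * 1) * 1 := by
          apply mul_le_mul _ (hVHnorm θ₀) (norm_nonneg _) (by norm_num)
          exact mul_le_mul (hVnorm _) hEnorm (norm_nonneg _) zero_le_one
      _ = 1 := by norm_num
  have hterm1 : ‖(matPderiv j V Θ * E) * (V θ₀)ᴴ‖ ≤ Cf := by
    calc ‖(matPderiv j V Θ * E) * (V θ₀)ᴴ‖
        ≤ ‖matPderiv j V Θ * E‖ * ‖(V θ₀)ᴴ‖ := Matrix.l2_opNorm_mul _ _
      _ ≤ (‖matPderiv j V Θ‖ * ‖E‖) * ‖(V θ₀)ᴴ‖ :=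
          mul_le_mul_of_nonneg_right (Matrix.l2_opNorm_mul _ _) (norm_nonneg _)
      _ ≤ (Cf * 1) * 1 := by
          apply mul_le_mul _ (hVHnorm θ₀) (norm_nonneg _) (by positivity)
          exact mul_le_mul (hpd j Θ) hEnorm (norm_nonneg _) hCf0
      _ = Cf := by ring
  have hterm2 : ‖(V Θ * E) * (matPderiv j V θ₀)ᴴ‖ ≤ Cf := by
    calc ‖(V Θ * E) * (matPderiv j V θ₀)ᴴ‖
        ≤ ‖V Θ * E‖ * ‖(matPderiv j V θ₀)ᴴ‖ := Matrix.l2_opNorm_mul _ _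
      _ ≤ (‖V Θ‖ * ‖E‖) * ‖(matPderiv j V θ₀)ᴴ‖ :=
          mul_le_mul_of_nonneg_right (Matrix.l2_opNorm_mul _ _) (norm_nonneg _)
      _ ≤ (1 * 1) * Cf := by
          apply mul_le_mul _ _ (norm_nonneg _) (by norm_num)
          · exact mul_le_mul (hVnorm _) hEnorm (norm_nonneg _) zero_le_one
          · rw [Matrix.l2_opNorm_conjTranspose]; exact hpd j θ₀
      _ = Cf := by ring
  calc ‖(-Complex.I) • ((floquetU V HF Ω t θ₀)ᴴ * matPderiv j (floquetU V HF Ω t) θ₀)‖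
      = ‖(floquetU V HF Ω t θ₀)ᴴ * matPderiv j (floquetU V HF Ω t) θ₀‖ := by
        rw [norm_smul]; simp
    _ ≤ ‖(floquetU V HF Ω t θ₀)ᴴ‖ * ‖matPderiv j (floquetU V HF Ω t) θ₀‖ :=
        Matrix.l2_opNorm_mul _ _
    _ ≤ 1 * (2 * Cf) := by
        apply mul_le_mul hUnorm _ (norm_nonneg _) zero_le_one
        rw [hDval]
        calc ‖(matPderiv j V Θ * E) * (V θ₀)ᴴ + (V Θ * E) * (matPderiv j V θ₀)ᴴ‖
            ≤ ‖(matPderiv j V Θ * E) * (V θ₀)ᴴ‖ + ‖(V Θ * E) * (matPderiv j V θ₀)ᴴ‖ :=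
              norm_add_le _ _
          _ ≤ Cf + Cf := add_le_add hterm1 hterm2
          _ = 2 * Cf := by ring
    _ = 2 * Cf := one_mul _
end
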